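/- arXiv:1312.7227 — 2 statements merged into one kernel-verified Lean document; each statement's English description precedes it below -/
import Mathlib

section
/- Let k be a field of characteristic zero, let Γ be a finite group acting linearly on a k-vector space H, let V be a k-vector space, and let k ≥ 1 and Λ : H × ⋯ × H → V (k factors) be a k-multilinear map that is Γ-invariant, i.e. Λ(σ·a₁, …, σ·a_k) = Λ(a₁, …, a_k) for all σ ∈ Γ and a₁, …, a_k ∈ H. Let H' ⊆ H be a Γ-invariant subspace with H' ∩ H^Γ = {0}. Then for any a₁, …, a_{k−1} ∈ H^Γ and any w ∈ H', one has Λ(a₁, …, a_{k−1}, w) = 0. -/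
/-- If `Γ` is a finite group acting linearly on a vector space `H` over a field of
characteristic zero, `Λ` is a `Γ`-invariant multilinear map in `m + 1 ≥ 1` arguments
with values in a vector space `V`, and `H'` is a `Γ`-invariant subspace with
`H' ∩ H^Γ = {0}`, then `Λ` vanishes whenever its first `m` arguments are `Γ`-invariant
vectors and its last argument lies in `H'`. -/
theorem multilinear_vanishes_on_invariants_and_complement
    {k H V : Type*} [Field k] [CharZero k]
    [AddCommGroup H] [Module k H] [AddCommGroup V] [Module k V]
    {Γ : Type*} [Group Γ] [Fintype Γ]
    (ρ : Representation k Γ H)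
    (m : ℕ)
    (Λ : MultilinearMap k (fun _ : Fin (m + 1) => H) V)
    (hΛinv : ∀ (σ : Γ) (a : Fin (m + 1) → H), Λ (fun i => ρ σ (a i)) = Λ a)
    (H' : Submodule k H)
    (hH'inv : ∀ σ : Γ, ∀ w ∈ H', ρ σ w ∈ H')
    (hdisj : ∀ v ∈ H', (∀ σ : Γ, ρ σ v = v) → v = 0)
    (a : Fin m → H) (ha : ∀ (i : Fin m) (σ : Γ), ρ σ (a i) = a i)
    (w : H) (hw : w ∈ H') :
    Λ (Fin.snoc a w) = 0 := by
  classical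
  -- linear map in the last coordinate
  have hL : ∀ x y : H, ∀ c : k,
      Λ (Fin.snoc a (c • x + y)) = c • Λ (Fin.snoc a x) + Λ (Fin.snoc a y) := by
    intro x y c
    have h1 : ∀ z : H, (Fin.snoc a z : Fin (m + 1) → H)
        = Function.update (Fin.snoc a x : Fin (m + 1) → H) (Fin.last m) z := by
      intro z
      funext i
      induction i using Fin.lastCases with
      | last => simp
      | cast j => simp [Function.update, (Fin.castSucc_lt_last j).ne]
    rw [h1 (c • x + y), Λ.map_update_add, Λ.map_update_smul, ← h1 x, ← h1 y]
  -- invariance in the last coordinate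
  have hstep : ∀ σ : Γ, Λ (Fin.snoc a (ρ σ w)) = Λ (Fin.snoc a w) := by
    intro σ
    have : (fun i => ρ σ ((Fin.snoc a w : Fin (m + 1) → H) i))
        = (Fin.snoc a (ρ σ w) : Fin (m + 1) → H) := by
      funext i
      induction i using Fin.lastCases with
      | last => simp
      | cast j => simp [ha j σ]
    rw [← this, hΛinv σ (Fin.snoc a w)]
  -- the average
  set p : H := ∑ σ : Γ, ρ σ w with hp
  have hpH' : p ∈ H' := Submodule.sum_mem _ fun σ _ => hH'inv σ w hw
  have hpinv : ∀ τ : Γ, ρ τ p = p := by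
    intro τ
    have : ρ τ p = ∑ σ : Γ, ρ (τ * σ) w := by
      rw [hp, map_sum]
      refine Finset.sum_congr rfl fun σ _ => ?_
      rw [map_mul]
      rfl
    rw [this]
    exact Fintype.sum_equiv (Equiv.mulLeft τ) _ _ fun σ => rfl
  have hp0 : p = 0 := hdisj p hpH' hpinv
  -- sum of Λ over the orbit
  have hlin : ∀ (s : Finset Γ), Λ (Fin.snoc a (∑ σ ∈ s, ρ σ w))
      = ∑ σ ∈ s, Λ (Fin.snoc a (ρ σ w)) := by
    intro s
    induction s using Finset.induction_on with
    | empty =>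
        have := hL 0 0 (0 : k)
        simpa using hL 0 0 (1 : k)
    | insert σ s hns ih =>
        rw [Finset.sum_insert hns, Finset.sum_insert hns, ← ih]
        simpa using hL (ρ σ w) (∑ τ ∈ s, ρ τ w) (1 : k)
  have hcard : (Fintype.card Γ : k) ≠ 0 := by
    exact_mod_cast Nat.cast_ne_zero.mpr Fintype.card_ne_zero
  have hsum : (Fintype.card Γ : k) • Λ (Fin.snoc a w) = 0 := by
    have h0 : Λ (Fin.snoc a p) = 0 := by
      rw [hp0]
      have := hL 0 0 (1 : k)
      simpa using this
    calc (Fintype.card Γ : k) • Λ (Fin.snoc a w)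
        = ∑ _σ : Γ, Λ (Fin.snoc a w) := by
          rw [Finset.sum_const, ← Nat.cast_smul_eq_nsmul k]
          simp
      _ = ∑ σ : Γ, Λ (Fin.snoc a (ρ σ w)) := by
          exact Finset.sum_congr rfl fun σ _ => (hstep σ).symm
      _ = Λ (Fin.snoc a p) := (hlin Finset.univ).symm
      _ = 0 := h0
  exact Or.resolve_left (smul_eq_zero.mp hsum) hcard
end

section
/- Let P ∈ ℂ[X] be a polynomial, t ∈ ℂ, f(x, y) = P(x) + x y² + t y, and λ(z) = P(z²) − t²/(4z²) for z ≠ 0. Let z ∈ ℂ with z ≠ 0 satisfy P′(z²) + t²/(4z⁴) = 0, so that (x, y) = (z², −t/(2z²)) is a critical point of f. Then the Hessian determinant of f at this point, H = (∂²f/∂x²)(∂²f/∂y²) − (∂²f/∂x∂y)², equals 2 z² P″(z²) − t²/z⁴, and the second derivative of λ at z satisfies λ″(z) = 2H, i.e. λ″(z) = 2·(2 z² P″(z²) − t²/z⁴). -/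
open Polynomial

lemma lam_hasDerivAt (P : Polynomial ℂ) (t : ℂ) (w : ℂ) (hw : w ≠ 0) :
    HasDerivAt (fun w : ℂ => P.eval (w ^ 2) - t ^ 2 / (4 * w ^ 2))
      (P.derivative.eval (w ^ 2) * (2 * w) + t ^ 2 * (8 * w) / (4 * w ^ 2) ^ 2) w := by
  have h1 : HasDerivAt (fun w : ℂ => w ^ 2) (2 * w) w := by
    simpa using (hasDerivAt_pow 2 w)
  have h2 : HasDerivAt (fun w : ℂ => P.eval (w ^ 2))
      (P.derivative.eval (w ^ 2) * (2 * w)) w :=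
    by have := (P.hasDerivAt (w ^ 2)).comp w h1; exact this
  have h3 : HasDerivAt (fun w : ℂ => 4 * w ^ 2) (4 * (2 * w)) w := h1.const_mul 4
  have h4 : HasDerivAt (fun w : ℂ => t ^ 2 / (4 * w ^ 2))
      ((0 * (4 * w ^ 2) - t ^ 2 * (4 * (2 * w))) / (4 * w ^ 2) ^ 2) w :=
    (hasDerivAt_const w (t ^ 2)).div h3 (by simp [hw, pow_eq_zero_iff])
  have : HasDerivAt (fun w : ℂ => P.eval (w ^ 2) - t ^ 2 / (4 * w ^ 2)) _ w := h2.sub h4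
  convert this using 1
  ring

/-- At a critical point `(z², −t/(2z²))` (with `z ≠ 0`) of
`f(x,y) = P(x) + x y² + t y`, the Hessian determinant
`(∂²f/∂x²)(∂²f/∂y²) − (∂²f/∂x∂y)²` (where `∂²f/∂x² = P″(x)`, `∂²f/∂y² = 2x`,
`∂²f/∂x∂y = 2y`) equals `2z²P″(z²) − t²/z⁴`, and the second derivative of the
superpotential `λ(z) = P(z²) − t²/(4z²)` satisfies
`λ″(z) = 2 (2z²P″(z²) − t²/z⁴) = 2H`. -/
theorem hessian_equals_half_second_derivative
    (P : Polynomial ℂ) (t : ℂ) (z : ℂ) (hz : z ≠ 0)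
    (hcrit : P.derivative.eval (z ^ 2) + t ^ 2 / (4 * z ^ 4) = 0) :
    P.derivative.derivative.eval (z ^ 2) * (2 * z ^ 2)
        - (2 * (-t / (2 * z ^ 2))) ^ 2
      = 2 * z ^ 2 * P.derivative.derivative.eval (z ^ 2) - t ^ 2 / z ^ 4 ∧
    deriv (deriv (fun w : ℂ => P.eval (w ^ 2) - t ^ 2 / (4 * w ^ 2))) z
      = 2 * (2 * z ^ 2 * P.derivative.derivative.eval (z ^ 2) - t ^ 2 / z ^ 4) := by
  constructor
  · field_simp
  · -- deriv λ agrees with g near z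
    set g : ℂ → ℂ := fun w =>
      P.derivative.eval (w ^ 2) * (2 * w) + t ^ 2 * (8 * w) / (4 * w ^ 2) ^ 2 with hg
    have heq : deriv (fun w : ℂ => P.eval (w ^ 2) - t ^ 2 / (4 * w ^ 2)) =ᶠ[nhds z] g := by
      filter_upwards [isOpen_compl_singleton.mem_nhds (by simpa using hz :
        z ∈ ({0}ᶜ : Set ℂ))] with w hw
      exact (lam_hasDerivAt P t w hw).deriv
    rw [heq.deriv_eq]
    -- compute deriv g z
    have h1 : HasDerivAt (fun w : ℂ => w ^ 2) (2 * z) z := by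
      simpa using (hasDerivAt_pow 2 z)
    have h2 : HasDerivAt (fun w : ℂ => P.derivative.eval (w ^ 2))
        (P.derivative.derivative.eval (z ^ 2) * (2 * z)) z :=
      by have := (P.derivative.hasDerivAt (z ^ 2)).comp z h1; exact this
    have h3 : HasDerivAt (fun w : ℂ => P.derivative.eval (w ^ 2) * (2 * w))
        (P.derivative.derivative.eval (z ^ 2) * (2 * z) * (2 * z)
          + P.derivative.eval (z ^ 2) * 2) z :=
      by simpa [Pi.mul_def] using h2.mul ((hasDerivAt_id z).const_mul 2)
    have h4 : HasDerivAt (fun w : ℂ => t ^ 2 * (8 * w)) (t ^ 2 * 8) z := by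
      simpa using ((hasDerivAt_id z).const_mul (8 : ℂ)).const_mul (t ^ 2)
    have h5 : HasDerivAt (fun w : ℂ => (4 * w ^ 2) ^ 2) (2 * (4 * z ^ 2) * (4 * (2 * z))) z := by
      have := ((hasDerivAt_pow 2 z).const_mul 4)
      have : HasDerivAt (fun w : ℂ => (4 * w ^ 2) ^ 2) _ z := this.pow 2
      convert this using 1
      ring
    have h6 : HasDerivAt (fun w : ℂ => t ^ 2 * (8 * w) / (4 * w ^ 2) ^ 2)
        ((t ^ 2 * 8 * (4 * z ^ 2) ^ 2
          - t ^ 2 * (8 * z) * (2 * (4 * z ^ 2) * (4 * (2 * z)))) / ((4 * z ^ 2) ^ 2) ^ 2) z :=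
      h4.div h5 (by simp [hz, pow_eq_zero_iff])
    have h7 : HasDerivAt g _ z := h3.add h6
    rw [h7.deriv]
    have hP : P.derivative.eval (z ^ 2) = - (t ^ 2 / (4 * z ^ 4)) := eq_neg_of_add_eq_zero_left hcrit
    rw [hP]
    field_simp
    ring
end
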